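/- arXiv:2602.23449 — 2 statements merged into one kernel-verified Lean document; each statement's English description precedes it below -/
import Mathlib

section
/- Let β, γ, ρ, α, β_R, N > 0, S_∞ ∈ (0,1), and let sat : ℝ → ℝ be differentiable at 0 with sat(0) = 0. Let x₀ = (0, S₀, 0, 0, p_R0) with S₀ > 0. The transfer map 𝓥 : ℝ⁵ → ℝ⁵ of the aggregated SIR model, given in coordinates x = (I, S, R, p_S, p_R) with p_I = S + I + R by 𝓥(x) = (γI, βSI/p_I + β_R SR/p_I − ρ I sat(α p_S/N), β_R((1−S_∞)/S_∞) SR/p_I − γI, ρ I sat(α p_S/N), −(β_R/S_∞) SR/p_I), is Fréchet differentiable at x₀, and its Jacobian matrix at x₀ (rows indexed by components of 𝓥, columns by (I, S, R, p_S, p_R)) is: row 1 = (γ, 0, 0, 0, 0); row 2 = (β, 0, β_R, 0, 0); row 3 = (−γ, 0, β_R(1−S_∞)/S_∞, 0, 0); row 4 = (0, 0, 0, 0, 0); row 5 = (0, 0, −β_R/S_∞, 0, 0). -/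
open ContinuousLinearMap

set_option maxHeartbeats 1000000 in
/-- The transfer map 𝓥 of the aggregated SIR model, in coordinates
`x = (I, S, R, p_S, p_R)` with `p_I = S + I + R`, is Fréchet differentiable at the
disease-free equilibrium `x₀ = (0, S₀, 0, 0, p_R0)` and its Jacobian there is
row 1 = (γ, 0, 0, 0, 0); row 2 = (β, 0, β_R, 0, 0);
row 3 = (−γ, 0, β_R(1−S_∞)/S_∞, 0, 0); row 4 = 0; row 5 = (0, 0, −β_R/S_∞, 0, 0). -/
theorem aggregated_transfer_hasFDerivAt_DFE
    (β γ ρ α βR N : ℝ) (hβ : 0 < β) (hγ : 0 < γ) (hρ : 0 < ρ)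
    (hα : 0 < α) (hβR : 0 < βR) (hN : 0 < N)
    (S_inf : ℝ) (hS_inf : S_inf ∈ Set.Ioo (0 : ℝ) 1)
    (sat : ℝ → ℝ) (hsat : DifferentiableAt ℝ sat 0) (hsat0 : sat 0 = 0)
    (S₀ pR0 : ℝ) (hS₀ : 0 < S₀) :
    ∃ L : (Fin 5 → ℝ) →L[ℝ] (Fin 5 → ℝ),
      HasFDerivAt
        (fun x : Fin 5 → ℝ =>
          (![γ * x 0,
             β * x 1 * x 0 / (x 1 + x 0 + x 2) +
               βR * x 1 * x 2 / (x 1 + x 0 + x 2) -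
               ρ * x 0 * sat (α * x 3 / N),
             βR * ((1 - S_inf) / S_inf) * x 1 * x 2 / (x 1 + x 0 + x 2) - γ * x 0,
             ρ * x 0 * sat (α * x 3 / N),
             -(βR / S_inf) * x 1 * x 2 / (x 1 + x 0 + x 2)] : Fin 5 → ℝ))
        L (![0, S₀, 0, 0, pR0]) ∧
      ∀ h : Fin 5 → ℝ,
        L h = ![γ * h 0,
                β * h 0 + βR * h 2,
                -(γ * h 0) + βR * ((1 - S_inf) / S_inf) * h 2,
                0,
                -(βR / S_inf) * h 2] := by
  obtain ⟨hS0, hS1⟩ := hS_inf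
  have hS0' : S_inf ≠ 0 := ne_of_gt hS0
  have hS₀' : S₀ ≠ 0 := ne_of_gt hS₀
  set x₀ : Fin 5 → ℝ := ![0, S₀, 0, 0, pR0] with hx₀
  have hx0 : x₀ 0 = 0 := rfl
  have hx1 : x₀ 1 = S₀ := rfl
  have hx2 : x₀ 2 = 0 := rfl
  have hx3 : x₀ 3 = 0 := rfl
  set P : Fin 5 → ((Fin 5 → ℝ) →L[ℝ] ℝ) := fun i => ContinuousLinearMap.proj i with hP_def
  have hP : ∀ i : Fin 5, HasFDerivAt (fun x : Fin 5 → ℝ => x i)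
      (P i) x₀ :=
    fun i => hasFDerivAt_apply i x₀
  -- denominator
  have hden : HasFDerivAt (fun x : Fin 5 → ℝ => x 1 + x 0 + x 2)
      (P 1 + P 0 + P 2) x₀ :=
    ((hP 1).add (hP 0)).add (hP 2)
  have hdenx : x₀ 1 + x₀ 0 + x₀ 2 = S₀ := by simp [hx0, hx1, hx2]
  have hne : x₀ 1 + x₀ 0 + x₀ 2 ≠ 0 := by rw [hdenx]; exact hS₀'
  have hinv : HasFDerivAt (fun x : Fin 5 → ℝ => (x 1 + x 0 + x 2)⁻¹)
      ((-(S₀ ^ 2)⁻¹) • (P 1 + P 0 + P 2)) x₀ := by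
    have := (hasDerivAt_inv (x := S₀) hS₀').comp_hasFDerivAt_of_eq x₀ hden hdenx.symm
    simpa [Function.comp_def] using this
  -- sat composed term
  have hinner : HasFDerivAt (fun x : Fin 5 → ℝ => α * x 3 / N)
      ((N⁻¹ : ℝ) • ((α : ℝ) • P 3)) x₀ := by
    have := ((hP 3).const_mul α).const_mul (N⁻¹)
    simpa [div_eq_mul_inv, mul_comm] using this
  have hinnerx : (0 : ℝ) = α * x₀ 3 / N := by simp [hx3]
  have hsatc : HasFDerivAt (fun x : Fin 5 → ℝ => sat (α * x 3 / N))
      ((deriv sat 0) • ((N⁻¹ : ℝ) • ((α : ℝ) • P 3))) x₀ := by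
    have := (hsat.hasDerivAt).comp_hasFDerivAt_of_eq x₀ hinner hinnerx
    simpa [Function.comp_def] using this
  have hterm3 : HasFDerivAt (fun x : Fin 5 → ℝ => ρ * x 0 * sat (α * x 3 / N))
      ((ρ * x₀ 0) • ((deriv sat 0) • ((N⁻¹ : ℝ) • ((α : ℝ) • P 3))) +
        (sat (α * x₀ 3 / N)) • ((ρ : ℝ) • P 0)) x₀ :=
    ((hP 0).const_mul ρ).mul hsatc
  have hnum1 : HasFDerivAt (fun x : Fin 5 → ℝ => β * x 1 * x 0)
      ((β * x₀ 1) • P 0 + (x₀ 0) • ((β : ℝ) • P 1)) x₀ :=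
    ((hP 1).const_mul β).mul (hP 0)
  have hnum2 : HasFDerivAt (fun x : Fin 5 → ℝ => βR * x 1 * x 2)
      ((βR * x₀ 1) • P 2 + (x₀ 2) • ((βR : ℝ) • P 1)) x₀ :=
    ((hP 1).const_mul βR).mul (hP 2)
  have hnum3 : HasFDerivAt (fun x : Fin 5 → ℝ => βR * ((1 - S_inf) / S_inf) * x 1 * x 2)
      ((βR * ((1 - S_inf) / S_inf) * x₀ 1) • P 2 +
        (x₀ 2) • ((βR * ((1 - S_inf) / S_inf)) • P 1)) x₀ := by
    have : HasFDerivAt (fun x : Fin 5 → ℝ => (βR * ((1 - S_inf) / S_inf)) * x 1)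
        ((βR * ((1 - S_inf) / S_inf)) • P 1) x₀ :=
      (hP 1).const_mul _
    simpa [mul_assoc, Pi.mul_def] using this.mul (hP 2)
  have hnum5 : HasFDerivAt (fun x : Fin 5 → ℝ => -(βR / S_inf) * x 1 * x 2)
      ((-(βR / S_inf) * x₀ 1) • P 2 +
        (x₀ 2) • ((-(βR / S_inf)) • P 1)) x₀ :=
    ((hP 1).const_mul _).mul (hP 2)
  -- component derivatives with evaluations
  obtain ⟨D0, hD0, hE0⟩ :
      ∃ D : (Fin 5 → ℝ) →L[ℝ] ℝ,
        HasFDerivAt (fun x : Fin 5 → ℝ => γ * x 0) D x₀ ∧ ∀ h, D h = γ * h 0 := by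
    have hD := (hP 0).const_mul γ
    refine ⟨_, hD, fun h => ?_⟩
    simp only [hP_def, ContinuousLinearMap.smul_apply, ContinuousLinearMap.proj_apply, smul_eq_mul]
  obtain ⟨D1, hD1, hE1⟩ :
      ∃ D : (Fin 5 → ℝ) →L[ℝ] ℝ,
        HasFDerivAt (fun x : Fin 5 → ℝ =>
          β * x 1 * x 0 / (x 1 + x 0 + x 2) + βR * x 1 * x 2 / (x 1 + x 0 + x 2) -
            ρ * x 0 * sat (α * x 3 / N)) D x₀ ∧ ∀ h, D h = β * h 0 + βR * h 2 := by
    have hD := ((hnum1.mul hinv).add (hnum2.mul hinv)).sub hterm3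
    simp only [div_eq_mul_inv] at hD ⊢
    refine ⟨_, hD, fun h => ?_⟩
    · simp only [hP_def, ContinuousLinearMap.add_apply, ContinuousLinearMap.sub_apply,
        ContinuousLinearMap.smul_apply, ContinuousLinearMap.proj_apply,
        ContinuousLinearMap.coe_sub', ContinuousLinearMap.coe_add', Pi.sub_apply, Pi.add_apply,
        smul_eq_mul, hx0, hx1, hx2, hx3, mul_zero, zero_div, zero_mul, hsat0]
      field_simp
      ring
  obtain ⟨D2, hD2, hE2⟩ :
      ∃ D : (Fin 5 → ℝ) →L[ℝ] ℝ,
        HasFDerivAt (fun x : Fin 5 → ℝ =>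
          βR * ((1 - S_inf) / S_inf) * x 1 * x 2 / (x 1 + x 0 + x 2) - γ * x 0) D x₀ ∧
          ∀ h, D h = -(γ * h 0) + βR * ((1 - S_inf) / S_inf) * h 2 := by
    have hD := (hnum3.mul hinv).sub ((hP 0).const_mul γ)
    simp only [div_eq_mul_inv] at hD ⊢
    refine ⟨_, hD, fun h => ?_⟩
    · simp only [hP_def, ContinuousLinearMap.add_apply, ContinuousLinearMap.sub_apply,
        ContinuousLinearMap.smul_apply, ContinuousLinearMap.proj_apply,
        ContinuousLinearMap.coe_sub', ContinuousLinearMap.coe_add', Pi.sub_apply, Pi.add_apply,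
        smul_eq_mul, hx0, hx1, hx2, hx3, mul_zero, zero_div, zero_mul, hsat0]
      field_simp
      ring
  obtain ⟨D3, hD3, hE3⟩ :
      ∃ D : (Fin 5 → ℝ) →L[ℝ] ℝ,
        HasFDerivAt (fun x : Fin 5 → ℝ => ρ * x 0 * sat (α * x 3 / N)) D x₀ ∧
          ∀ h, D h = 0 := by
    refine ⟨_, hterm3, fun h => ?_⟩
    simp only [hP_def, ContinuousLinearMap.add_apply, ContinuousLinearMap.sub_apply,
        ContinuousLinearMap.smul_apply, ContinuousLinearMap.proj_apply,
        ContinuousLinearMap.coe_sub', ContinuousLinearMap.coe_add', Pi.sub_apply, Pi.add_apply,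
        smul_eq_mul, hx0, hx1, hx2, hx3, mul_zero, zero_div, zero_mul, hsat0]
    norm_num
  obtain ⟨D4, hD4, hE4⟩ :
      ∃ D : (Fin 5 → ℝ) →L[ℝ] ℝ,
        HasFDerivAt (fun x : Fin 5 → ℝ => -(βR / S_inf) * x 1 * x 2 / (x 1 + x 0 + x 2)) D x₀ ∧
          ∀ h, D h = -(βR / S_inf) * h 2 := by
    have hD := hnum5.mul hinv
    simp only [div_eq_mul_inv] at hD ⊢
    refine ⟨_, hD, fun h => ?_⟩
    · simp only [hP_def, ContinuousLinearMap.add_apply, ContinuousLinearMap.sub_apply,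
        ContinuousLinearMap.smul_apply, ContinuousLinearMap.proj_apply,
        ContinuousLinearMap.coe_sub', ContinuousLinearMap.coe_add', Pi.sub_apply, Pi.add_apply,
        smul_eq_mul, hx0, hx1, hx2, hx3, mul_zero, zero_div, zero_mul, hsat0]
      field_simp
      ring
  refine ⟨ContinuousLinearMap.pi ![D0, D1, D2, D3, D4], ?_, ?_⟩
  · rw [hasFDerivAt_pi']
    intro i
    rw [ContinuousLinearMap.proj_pi]
    fin_cases i <;> simp only [Matrix.cons_val_zero, Matrix.cons_val_one, Matrix.head_cons,
      Matrix.cons_val_two, Matrix.tail_cons, Matrix.cons_val_three, Matrix.cons_val_four,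
      Fin.mk_zero, Fin.mk_one]
    · exact hD0
    · exact hD1
    · exact hD2
    · exact hD3
    · exact hD4
  · intro h
    funext i
    fin_cases i <;>
      simp [ContinuousLinearMap.pi_apply, hE0 h, hE1 h, hE2 h, hE3 h, hE4 h]
end

section
/- (Final size relation) For every real number R₀ > 1 there exists a unique r ∈ (0, 1) satisfying the transcendental equation r = 1 − exp(−R₀ r). -/
/-- Final size relation: for every `R₀ > 1` there is a unique
`r ∈ (0, 1)` with `r = 1 − exp(−R₀ r)`. -/
theorem final_size_relation_existsUnique
    (R₀ : ℝ) (hR₀ : 1 < R₀) :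
    ∃! r : ℝ, r ∈ Set.Ioo (0 : ℝ) 1 ∧ r = 1 - Real.exp (-(R₀ * r)) := by
  set g : ℝ → ℝ := fun r => 1 - Real.exp (-(R₀ * r)) - r with hg_def
  have hR0 : (0 : ℝ) < R₀ := lt_trans one_pos hR₀
  have hg : ∀ x : ℝ, HasDerivAt g (R₀ * Real.exp (-(R₀ * x)) - 1) x := by
    intro x
    have h1 : HasDerivAt (fun r : ℝ => -(R₀ * r)) (-R₀) x := by
      simpa using (hasDerivAt_id x).const_mul (-R₀)
    have h2 := h1.exp
    have h3 := ((hasDerivAt_const x (1:ℝ)).sub h2).sub (hasDerivAt_id x)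
    have h4 : HasDerivAt g (0 - Real.exp (-(R₀ * x)) * -R₀ - 1) x := h3
    convert h4 using 1
    ring
  have hgc : Continuous g := by
    simpa [hg_def, Pi.sub_def] using (continuous_const.sub ((continuous_const.mul continuous_id).neg.rexp)).sub continuous_id
  have hg0 : g 0 = 0 := by simp [hg_def]
  have hg1 : g 1 < 0 := by
    have : Real.exp (-(R₀ * 1)) > 0 := Real.exp_pos _
    simp only [hg_def]
    linarith
  -- no two distinct zeros with 0 < a < b
  have key : ∀ a b : ℝ, 0 < a → a < b → g a = 0 → g b = 0 → False := by
    intro a b ha hab hga hgb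
    obtain ⟨c₁, hc₁, hd₁⟩ := exists_hasDerivAt_eq_slope g _ ha
      (hgc.continuousOn) (fun x _ => hg x)
    obtain ⟨c₂, hc₂, hd₂⟩ := exists_hasDerivAt_eq_slope g _ hab
      (hgc.continuousOn) (fun x _ => hg x)
    rw [hga, hg0] at hd₁
    rw [hga, hgb] at hd₂
    simp at hd₁ hd₂
    have he : Real.exp (-(R₀ * c₁)) = Real.exp (-(R₀ * c₂)) := by
      have h1 : R₀ * Real.exp (-(R₀ * c₁)) = 1 := by linarith
      have h2 : R₀ * Real.exp (-(R₀ * c₂)) = 1 := by linarith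
      exact mul_left_cancel₀ (ne_of_gt hR0) (h1.trans h2.symm)
    have : c₁ = c₂ := by
      have h3 := Real.exp_injective he
      have h4 : R₀ * c₁ = R₀ * c₂ := by linarith [neg_inj.mp h3]
      exact mul_left_cancel₀ (ne_of_gt hR0) h4
    have : c₁ < c₂ := lt_trans hc₁.2 hc₂.1
    linarith
  -- existence of small c with g c > 0
  have hslope : Filter.Tendsto (slope g 0) (nhdsWithin 0 (Set.Ioi 0)) (nhds (R₀ - 1)) := by
    have h := (hg 0).hasDerivWithinAt (s := Set.Ioi (0:ℝ))
    have h1 := hasDerivWithinAt_iff_tendsto_slope.mp h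
    have h2 : Set.Ioi (0:ℝ) \ {0} = Set.Ioi 0 :=
      Set.diff_singleton_eq_self (by simp)
    rw [h2] at h1
    simpa using h1
  have hpos : ∀ᶠ c in nhdsWithin 0 (Set.Ioi (0:ℝ)), 0 < slope g 0 c :=
    hslope.eventually (eventually_gt_nhds (by linarith))
  have hmem : ∀ᶠ c in nhdsWithin 0 (Set.Ioi (0:ℝ)), c ∈ Set.Ioo (0:ℝ) 1 := by
    filter_upwards [self_mem_nhdsWithin,
      Ioo_mem_nhdsGT_of_mem (Set.left_mem_Ico.mpr one_pos)] with c h1 h2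
    exact ⟨h1, h2.2⟩
  obtain ⟨c, hc1, hc2⟩ := (hpos.and hmem).exists
  have hgcpos : 0 < g c := by
    have hsl : slope g 0 c = g c / c := by simp [slope_def_field, hg0]
    rw [hsl] at hc1
    have := mul_pos hc1 hc2.1
    rwa [div_mul_cancel₀ _ (ne_of_gt hc2.1)] at this
  -- IVT
  have hiv := intermediate_value_Ioo' (le_of_lt hc2.2) (hgc.continuousOn (s := Set.Icc c 1))
  have h0mem : (0:ℝ) ∈ Set.Ioo (g 1) (g c) := ⟨hg1, hgcpos⟩
  obtain ⟨r, hr, hgr⟩ := hiv h0mem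
  have hrmem : r ∈ Set.Ioo (0:ℝ) 1 := ⟨lt_trans hc2.1 hr.1, hr.2⟩
  refine ⟨r, ⟨hrmem, by simp only [hg_def] at hgr; linarith⟩, ?_⟩
  rintro y ⟨hy, hyeq⟩
  have hgy : g y = 0 := by simp only [hg_def]; linarith
  have hgr' : g r = 0 := hgr
  rcases lt_trichotomy y r with h | h | h
  · exact absurd (key y r hy.1 h hgy hgr') (fun f => f.elim)
  · exact h
  · exact absurd (key r y hrmem.1 h hgr' hgy) (fun f => f.elim)
end
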